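/- Let Z be a Banach space, V ↪ Z a continuously embedded Banach space, W = Z*, and L : V → W a bounded, symmetric (as above) linear operator which is Fredholm of index zero. Let V₀ = ker L, let P : V → V be a continuous projection with image V₀, and let J : V → Z** be the canonical injection restricted to V. Then J(Im P) = ker L*, and consequently Im L = ker P* ∩ W, where P* is the adjoint projection and ker P* ∩ W is computed inside V* via the embedding W ↪ V*. -/

import Mathlib

/-- Hahn–Banach separation of a point from a closed subspace: there is a continuous
linear functional vanishing on the subspace and nonzero at the point. -/
lemma stmt_3_aux_sep {E : Type*} [NormedAddCommGroup E] [NormedSpace ℝ E]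
    (s : Submodule ℝ E) (hs : IsClosed (s : Set E)) {x : E} (hx : x ∉ s) :
    ∃ f : E →L[ℝ] ℝ, (∀ a ∈ s, f a = 0) ∧ f x ≠ 0 := by
  obtain ⟨f, u, hfs, hux⟩ := geometric_hahn_banach_closed_point s.convex hs hx
  have hvanish : ∀ a ∈ s, f a = 0 := by
    intro a ha
    by_contra h
    have h1 := hfs ((u / f a) • a) (s.smul_mem _ ha)
    rw [map_smul, smul_eq_mul, div_mul_cancel₀ _ h] at h1
    exact lt_irrefl _ h1
  have h0 : (0 : ℝ) < u := by simpa using hfs 0 s.zero_mem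
  exact ⟨f, hvanish, (h0.trans hux).ne'⟩

set_option maxHeartbeats 1600000 in
/-- Let `Z` be a Banach space, `V ↪ Z` continuously embedded (via `i`), `W = Z*`, and
`L : V → W` a bounded, symmetric linear operator which is Fredholm of index zero
(kernel finite dimensional, closed range, and a finite dimensional complement `C` of
the range with `dim C = dim ker L`).  Let `P : V → V` be a continuous projection with
image `V₀ = ker L`, and `J : V → Z**` the canonical injection restricted to `V`.
Then `J (Im P) = ker L*` and `Im L = ker P* ∩ W`, where
`ker P* ∩ W = { w ∈ W : w (P v) = 0 for all v ∈ V }` is computed inside `V*` via the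
embedding `W ↪ V*`. -/
theorem stmt_3
    {V Z : Type*} [NormedAddCommGroup V] [NormedSpace ℝ V] [CompleteSpace V]
    [NormedAddCommGroup Z] [NormedSpace ℝ Z] [CompleteSpace Z]
    (i : V →L[ℝ] Z) (hi : Function.Injective i)
    (L : V →L[ℝ] StrongDual ℝ Z)
    (hsymm : ∀ φ ψ : V, L φ (i ψ) = L ψ (i φ))
    (hker : FiniteDimensional ℝ (LinearMap.ker (L : V →ₗ[ℝ] StrongDual ℝ Z)))
    (hclosed : IsClosed (LinearMap.range (L : V →ₗ[ℝ] StrongDual ℝ Z) : Set (StrongDual ℝ Z)))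
    (C : Submodule ℝ (StrongDual ℝ Z))
    (hcompl : IsCompl (LinearMap.range (L : V →ₗ[ℝ] StrongDual ℝ Z)) C)
    (hC : FiniteDimensional ℝ C)
    (hidx : Module.finrank ℝ C = Module.finrank ℝ (LinearMap.ker (L : V →ₗ[ℝ] StrongDual ℝ Z)))
    (P : V →L[ℝ] V) (hproj : P.comp P = P)
    (hrange : LinearMap.range (P : V →ₗ[ℝ] V) = LinearMap.ker (L : V →ₗ[ℝ] StrongDual ℝ Z))
    (Lstar : StrongDual ℝ (StrongDual ℝ Z) →L[ℝ] StrongDual ℝ V)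
    (hLstar : ∀ (F : StrongDual ℝ (StrongDual ℝ Z)) (φ : V),
      Lstar F φ = F (L φ))
    (J : V → StrongDual ℝ (StrongDual ℝ Z))
    (hJ : ∀ v : V, J v = NormedSpace.inclusionInDoubleDual ℝ Z (i v)) :
    J '' (LinearMap.range (P : V →ₗ[ℝ] V) : Set V) = (LinearMap.ker (Lstar : StrongDual ℝ (StrongDual ℝ Z) →ₗ[ℝ] StrongDual ℝ V) : Set _) ∧
      (LinearMap.range (L : V →ₗ[ℝ] StrongDual ℝ Z) : Set (StrongDual ℝ Z)) =
        {w : StrongDual ℝ Z | ∀ v : V, w (i (P v)) = 0} := by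
  classical
  letI : AddCommGroup (StrongDual ℝ Z) := ContinuousLinearMap.addCommGroup
  letI : AddCommGroup (StrongDual ℝ (StrongDual ℝ Z)) := ContinuousLinearMap.addCommGroup
  set T : V →L[ℝ] StrongDual ℝ (StrongDual ℝ Z) :=
    (NormedSpace.inclusionInDoubleDual ℝ Z).comp i with hT
  have hTapp : ∀ (v : V) (w : StrongDual ℝ Z), T v w = w (i v) := by
    intro v w
    simp [hT, NormedSpace.dual_def]
  set Tl : V →ₗ[ℝ] StrongDual ℝ (StrongDual ℝ Z) := T.toLinearMap with hTl
  have hTinj : Function.Injective Tl := by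
    intro a b hab
    apply hi
    rw [NormedSpace.eq_iff_forall_dual_eq ℝ]
    intro g
    have := DFunLike.congr_fun hab g
    exact (hTapp a g).symm.trans (this.trans (hTapp b g))
  set K : Submodule ℝ V := LinearMap.ker (L : V →ₗ[ℝ] StrongDual ℝ Z) with hK
  -- membership in ker Lstar
  have hmem : ∀ F, F ∈ LinearMap.ker (Lstar : StrongDual ℝ (StrongDual ℝ Z) →ₗ[ℝ] StrongDual ℝ V) ↔ ∀ φ : V, F (L φ) = 0 := by
    intro F
    rw [LinearMap.mem_ker]
    constructor
    · intro h φ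
      rw [← hLstar, show Lstar F = 0 from h]
      rfl
    · intro h
      ext φ
      rw [show (Lstar : StrongDual ℝ (StrongDual ℝ Z) →ₗ[ℝ] StrongDual ℝ V) F = Lstar F from rfl, hLstar]
      simpa using h φ
  -- J(ker L) ⊆ ker Lstar
  have hle : Submodule.map Tl K ≤ LinearMap.ker (Lstar : StrongDual ℝ (StrongDual ℝ Z) →ₗ[ℝ] StrongDual ℝ V) := by
    rintro _ ⟨v, hv, rfl⟩
    rw [hmem]
    intro φ
    have : (Tl v) (L φ) = L φ (i v) := hTapp v (L φ)
    rw [this, hsymm φ v, show L v = 0 from hv]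
    rfl
  -- ker Lstar embeds into the dual of C
  let h0 : StrongDual ℝ (StrongDual ℝ Z) →ₗ[ℝ] Module.Dual ℝ C :=
    { toFun := fun F => (F.toLinearMap).comp C.subtype
      map_add' := by intro F G; ext c; rfl
      map_smul' := by intro a F; ext c; rfl }
  let g : LinearMap.ker (Lstar : StrongDual ℝ (StrongDual ℝ Z) →ₗ[ℝ] StrongDual ℝ V) →ₗ[ℝ] Module.Dual ℝ C :=
    h0.comp (LinearMap.ker (Lstar : StrongDual ℝ (StrongDual ℝ Z) →ₗ[ℝ] StrongDual ℝ V)).subtype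
  have hginj : Function.Injective g := by
    intro F G hFG
    ext x
    have hx : x ∈ LinearMap.range (L : V →ₗ[ℝ] StrongDual ℝ Z) ⊔ C := by
      rw [hcompl.sup_eq_top]; trivial
    obtain ⟨y, hy, z, hz, rfl⟩ := Submodule.mem_sup.1 hx
    obtain ⟨φ, rfl⟩ := hy
    have h1 : (F : StrongDual ℝ (StrongDual ℝ Z)) (L φ) =
        (G : StrongDual ℝ (StrongDual ℝ Z)) (L φ) := by
      rw [(hmem _).1 F.2 φ, (hmem _).1 G.2 φ]
    have h2 : (F : StrongDual ℝ (StrongDual ℝ Z)) z =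
        (G : StrongDual ℝ (StrongDual ℝ Z)) z := by
      have := DFunLike.congr_fun hFG (⟨z, hz⟩ : C)
      exact this
    simp only [map_add, ContinuousLinearMap.coe_coe, h1, h2]
  haveI : FiniteDimensional ℝ (LinearMap.ker (Lstar : StrongDual ℝ (StrongDual ℝ Z) →ₗ[ℝ] StrongDual ℝ V)) :=
    FiniteDimensional.of_injective g hginj
  -- finrank comparison
  have hrank1 : Module.finrank ℝ (LinearMap.ker (Lstar : StrongDual ℝ (StrongDual ℝ Z) →ₗ[ℝ] StrongDual ℝ V)) ≤ Module.finrank ℝ K := by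
    calc Module.finrank ℝ (LinearMap.ker (Lstar : StrongDual ℝ (StrongDual ℝ Z) →ₗ[ℝ] StrongDual ℝ V))
        ≤ Module.finrank ℝ (Module.Dual ℝ C) :=
          LinearMap.finrank_le_finrank_of_injective hginj
      _ = Module.finrank ℝ C := Subspace.dual_finrank_eq
      _ = Module.finrank ℝ K := hidx
  have hrank2 : Module.finrank ℝ (Submodule.map Tl K) = Module.finrank ℝ K :=
    (Submodule.equivMapOfInjective Tl hTinj K).finrank_eq.symm
  have heq : Submodule.map Tl K = LinearMap.ker (Lstar : StrongDual ℝ (StrongDual ℝ Z) →ₗ[ℝ] StrongDual ℝ V) :=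
    Submodule.eq_of_le_of_finrank_le hle (by rw [hrank2]; exact hrank1)
  -- first statement
  have hJT : ∀ v : V, J v = Tl v := by
    intro v
    rw [hJ v]
    rfl
  have goal1 : J '' (LinearMap.range (P : V →ₗ[ℝ] V) : Set V) = (LinearMap.ker (Lstar : StrongDual ℝ (StrongDual ℝ Z) →ₗ[ℝ] StrongDual ℝ V) : Set _) := by
    have h1 : J '' (LinearMap.range (P : V →ₗ[ℝ] V) : Set V) = Tl '' (K : Set V) := by
      rw [show (LinearMap.range (P : V →ₗ[ℝ] V) : Set V) = (K : Set V) from congrArg _ hrange]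
      exact Set.image_congr fun v _ => hJT v
    rw [h1, ← heq]
    exact (Submodule.map_coe Tl K).symm
  refine ⟨goal1, ?_⟩
  -- second statement
  ext w
  simp only [Set.mem_setOf_eq, SetLike.mem_coe]
  constructor
  · rintro ⟨φ, rfl⟩ v
    have hPv : P v ∈ K := by rw [← hrange]; exact ⟨v, rfl⟩
    rw [ContinuousLinearMap.coe_coe, hsymm φ (P v), show L (P v) = 0 from hPv]
    rfl
  · intro hw
    have hx : w ∈ LinearMap.range (L : V →ₗ[ℝ] StrongDual ℝ Z) ⊔ C := by
      rw [hcompl.sup_eq_top]; trivial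
    obtain ⟨r, hr, c, hc, hsum⟩ := Submodule.mem_sup.1 hx
    obtain ⟨φ, rfl⟩ := hr
    -- c vanishes on i(ker L)
    have hcv : ∀ v ∈ K, c (i v) = 0 := by
      intro v hv
      obtain ⟨u, rfl⟩ : v ∈ LinearMap.range (P : V →ₗ[ℝ] V) := by rw [hrange]; exact hv
      have hPu : P u ∈ K := by rw [← hrange]; exact ⟨u, rfl⟩
      have h1 : L φ (i (P u)) = 0 := by
        rw [hsymm φ (P u), show L (P u) = 0 from hPu]; rfl
      have h2 := hw u
      have h3 : (L φ + c) (i (P u)) = 0 := by rw [← ContinuousLinearMap.coe_coe L, hsum]; exact h2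
      simpa [h1] using h3
    -- c = 0
    have hc0 : c = 0 := by
      by_contra hne
      have hcnot : c ∉ LinearMap.range (L : V →ₗ[ℝ] StrongDual ℝ Z) := by
        intro hmemc
        exact hne (Submodule.disjoint_def.1 hcompl.disjoint c hmemc hc)
      obtain ⟨F, hF0, hFc⟩ := stmt_3_aux_sep (E := StrongDual ℝ Z) (LinearMap.range (L : V →ₗ[ℝ] StrongDual ℝ Z)) hclosed hcnot
      have hFker : F ∈ LinearMap.ker (Lstar : StrongDual ℝ (StrongDual ℝ Z) →ₗ[ℝ] StrongDual ℝ V) := by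
        rw [hmem]
        intro ψ
        exact hF0 (L ψ) ⟨ψ, rfl⟩
      rw [← heq] at hFker
      obtain ⟨v, hv, rfl⟩ := hFker
      exact hFc ((hTapp v c).trans (hcv v hv))
    rw [← hsum, hc0, add_zero]
    exact ⟨φ, rfl⟩
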